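/- Let n ≥ 3 be an integer, α > 0 a real number, and d > 1. Set T = ln(d)/(2n). Then the function t ↦ (d e^{-2nt})^{α/2} (d e^{-2nt} - 1)^{(n-α)/2} is integrable on the interval (0, T) if and only if α < n+2. -/

import Mathlib

open Real MeasureTheory

/-- Reflection of `integrableOn_Ioo_rpow_iff`: `(T - t) ^ p` is integrable on `(0, T)`
iff `-1 < p`. -/
lemma integrableOn_sub_rpow_iff' {T p : ℝ} (hT : 0 < T) :
    IntegrableOn (fun t : ℝ => (T - t) ^ p) (Set.Ioo 0 T) ↔ -1 < p := by
  rw [← intervalIntegrable_iff_integrableOn_Ioo_of_le hT.le]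
  have key : IntervalIntegrable (fun t : ℝ => (T - t) ^ p) volume 0 T ↔
      IntervalIntegrable (fun s : ℝ => s ^ p) volume 0 T := by
    constructor
    · intro h
      have h2 := (h.comp_sub_left T).symm
      simpa [sub_sub_cancel] using h2
    · intro h
      have h2 := (h.comp_sub_left T).symm
      simpa using h2
  rw [key, intervalIntegrable_iff_integrableOn_Ioo_of_le hT.le,
    intervalIntegral.integrableOn_Ioo_rpow_iff hT]

set_option maxHeartbeats 1000000 in
/-- Hyperbolic ambient example: for an integer `n ≥ 3`, a real `α > 0`, `d > 1` and
`T = ln d/(2n)`, the function `t ↦ (d e^{-2nt})^{α/2} (d e^{-2nt} - 1)^{(n-α)/2}` is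
integrable on `(0, T)` if and only if `α < n + 2`. -/
theorem integrable_hyperbolic_ambient_iff (n : ℕ) (hn : 3 ≤ n) (α : ℝ) (hα : 0 < α)
    (d : ℝ) (hd : 1 < d) (T : ℝ) (hT : T = Real.log d / (2 * n)) :
    IntegrableOn
      (fun t : ℝ => (d * Real.exp (-(2 * n * t))) ^ (α / 2) *
        (d * Real.exp (-(2 * n * t)) - 1) ^ (((n : ℝ) - α) / 2))
      (Set.Ioo (0 : ℝ) T) ↔ α < n + 2 := by
  set p : ℝ := ((n : ℝ) - α) / 2 with hp_def
  set f : ℝ → ℝ := fun t : ℝ => (d * Real.exp (-(2 * n * t))) ^ (α / 2) *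
        (d * Real.exp (-(2 * n * t)) - 1) ^ p with hf_def
  have hn0 : (0 : ℝ) < (n : ℝ) := by exact_mod_cast (by omega : 0 < n)
  have hN : (0 : ℝ) < 2 * (n : ℝ) := by linarith
  have hd0 : (0 : ℝ) < d := by linarith
  have hlogd : 2 * (n : ℝ) * T = Real.log d := by
    rw [hT]; field_simp
  have hTpos : 0 < T := by
    rw [hT]
    exact div_pos (Real.log_pos hd) hN
  -- rewrite the base using `d = exp (2 n T)`
  have hde : ∀ t : ℝ, d * Real.exp (-(2 * n * t)) = Real.exp (2 * n * (T - t)) := by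
    intro t
    rw [← Real.exp_log hd0, ← hlogd, ← Real.exp_add]
    ring_nf
  -- constants for the two-sided comparison with `(T - t) ^ p`
  set C₁ : ℝ := min ((2 * (n : ℝ)) ^ p) ((2 * (n : ℝ) * d) ^ p) with hC₁_def
  set C₂ : ℝ := d ^ (α / 2) * ((2 * (n : ℝ)) ^ p + (2 * (n : ℝ) * d) ^ p) with hC₂_def
  have hC₁pos : 0 < C₁ :=
    lt_min (Real.rpow_pos_of_pos hN p) (Real.rpow_pos_of_pos (by positivity) p)
  -- the two-sided pointwise estimates on `Ioo 0 T`
  have hbounds : ∀ t ∈ Set.Ioo (0 : ℝ) T,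
      C₁ * (T - t) ^ p ≤ f t ∧ f t ≤ C₂ * (T - t) ^ p := by
    intro t ht
    obtain ⟨ht0, htT⟩ := ht
    set s : ℝ := T - t with hs_def
    have hs : 0 < s := by simp [hs_def]; linarith
    have hsT : s ≤ T := by simp [hs_def]; linarith
    have hE1 : 1 ≤ Real.exp (2 * n * s) := Real.one_le_exp (by positivity)
    have hEd : Real.exp (2 * n * s) ≤ d := by
      calc Real.exp (2 * n * s) ≤ Real.exp (2 * n * T) := by
            apply Real.exp_le_exp.2; nlinarith
        _ = d := by rw [hlogd, Real.exp_log hd0]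
    set x : ℝ := Real.exp (2 * n * s) - 1 with hx_def
    have hx1 : 2 * (n : ℝ) * s ≤ x := by
      have := Real.add_one_le_exp (2 * (n : ℝ) * s)
      simp only [hx_def]; linarith
    have hx2 : x ≤ 2 * (n : ℝ) * d * s := by
      have h1 : (1 - 2 * (n : ℝ) * s) * Real.exp (2 * n * s) ≤ 1 := by
        have h0 : (1 - 2 * (n : ℝ) * s) ≤ Real.exp (-(2 * n * s)) := by
          have := Real.add_one_le_exp (-(2 * (n : ℝ) * s)); linarith
        calc (1 - 2 * (n : ℝ) * s) * Real.exp (2 * n * s)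
            ≤ Real.exp (-(2 * n * s)) * Real.exp (2 * n * s) :=
              mul_le_mul_of_nonneg_right h0 (Real.exp_pos _).le
          _ = 1 := by rw [← Real.exp_add]; simp
      have hEpos := Real.exp_pos (2 * (n : ℝ) * s)
      simp only [hx_def]
      nlinarith
    have hxpos : 0 < x := by nlinarith
    have hspow : (0 : ℝ) ≤ s ^ p := Real.rpow_nonneg hs.le p
    -- bounds on `x ^ p`
    have hxub : x ^ p ≤ ((2 * (n : ℝ)) ^ p + (2 * (n : ℝ) * d) ^ p) * s ^ p := by
      rcases le_or_gt 0 p with hp | hp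
      · have h1 : x ^ p ≤ (2 * (n : ℝ) * d * s) ^ p := Real.rpow_le_rpow hxpos.le hx2 hp
        have h2 : (2 * (n : ℝ) * d * s) ^ p = (2 * (n : ℝ) * d) ^ p * s ^ p :=
          Real.mul_rpow (by positivity) hs.le
        have h3 : (0 : ℝ) ≤ (2 * (n : ℝ)) ^ p * s ^ p := by positivity
        rw [h2] at h1; nlinarith
      · have h1 : x ^ p ≤ (2 * (n : ℝ) * s) ^ p :=
          Real.rpow_le_rpow_of_nonpos (by positivity) hx1 hp.le
        have h2 : (2 * (n : ℝ) * s) ^ p = (2 * (n : ℝ)) ^ p * s ^ p :=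
          Real.mul_rpow (by positivity) hs.le
        have h3 : (0 : ℝ) ≤ (2 * (n : ℝ) * d) ^ p * s ^ p := by positivity
        rw [h2] at h1; nlinarith
    have hxlb : C₁ * s ^ p ≤ x ^ p := by
      rcases le_or_gt 0 p with hp | hp
      · have h1 : (2 * (n : ℝ) * s) ^ p ≤ x ^ p := Real.rpow_le_rpow (by positivity) hx1 hp
        have h2 : (2 * (n : ℝ) * s) ^ p = (2 * (n : ℝ)) ^ p * s ^ p :=
          Real.mul_rpow (by positivity) hs.le
        have h3 : C₁ ≤ (2 * (n : ℝ)) ^ p := min_le_left _ _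
        rw [h2] at h1
        exact le_trans (mul_le_mul_of_nonneg_right h3 hspow) h1
      · have h1 : (2 * (n : ℝ) * d * s) ^ p ≤ x ^ p :=
          Real.rpow_le_rpow_of_nonpos hxpos hx2 hp.le
        have h2 : (2 * (n : ℝ) * d * s) ^ p = (2 * (n : ℝ) * d) ^ p * s ^ p :=
          Real.mul_rpow (by positivity) hs.le
        have h3 : C₁ ≤ (2 * (n : ℝ) * d) ^ p := min_le_right _ _
        rw [h2] at h1
        exact le_trans (mul_le_mul_of_nonneg_right h3 hspow) h1
    -- first factor bounds
    have hF1l : 1 ≤ (Real.exp (2 * n * s)) ^ (α / 2) :=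
      Real.one_le_rpow hE1 (by positivity)
    have hF1u : (Real.exp (2 * n * s)) ^ (α / 2) ≤ d ^ (α / 2) :=
      Real.rpow_le_rpow (Real.exp_pos _).le hEd (by positivity)
    have hfeq : f t = (Real.exp (2 * n * s)) ^ (α / 2) * x ^ p := by
      simp only [hf_def, hde t, hx_def, hs_def]
    have hxp_nonneg : (0 : ℝ) ≤ x ^ p := Real.rpow_nonneg hxpos.le p
    constructor
    · rw [hfeq]
      calc C₁ * s ^ p ≤ x ^ p := hxlb
        _ = 1 * x ^ p := (one_mul _).symm
        _ ≤ (Real.exp (2 * n * s)) ^ (α / 2) * x ^ p :=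
          mul_le_mul_of_nonneg_right hF1l hxp_nonneg
    · rw [hfeq, hC₂_def, mul_assoc (d ^ (α / 2))]
      exact mul_le_mul hF1u hxub hxp_nonneg (by positivity)
  have hfnonneg : ∀ t ∈ Set.Ioo (0 : ℝ) T, 0 ≤ f t := by
    intro t ht
    have := (hbounds t ht).1
    have h0 : (0 : ℝ) ≤ C₁ * (T - t) ^ p := by
      have : (0:ℝ) ≤ (T - t) ^ p := Real.rpow_nonneg (by linarith [ht.2]) p
      positivity
    linarith
  -- measurability
  have hbmeas : Measurable fun t : ℝ => d * Real.exp (-(2 * (n : ℝ) * t)) :=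
    measurable_const.mul (((measurable_id.const_mul _).neg).exp)
  have hfmeas : AEStronglyMeasurable f (volume.restrict (Set.Ioo (0 : ℝ) T)) := by
    apply Measurable.aestronglyMeasurable
    simp only [hf_def]
    measurability
  have hgmeas : AEStronglyMeasurable (fun t : ℝ => (T - t) ^ p)
      (volume.restrict (Set.Ioo (0 : ℝ) T)) := by
    have hrp : Measurable fun x : ℝ => x ^ p := by measurability
    exact (hrp.comp (measurable_const.sub measurable_id)).aestronglyMeasurable
  constructor
  · intro hf
    by_contra hcon
    push_neg at hcon
    have hple : p ≤ -1 := by rw [hp_def]; linarith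
    have hint : IntegrableOn (fun t : ℝ => (T - t) ^ p) (Set.Ioo (0 : ℝ) T) := by
      apply Integrable.mono' (hf.const_mul C₁⁻¹) hgmeas
      filter_upwards [ae_restrict_mem measurableSet_Ioo] with t ht
      have h1 := (hbounds t ht).1
      have h2 : (0:ℝ) ≤ (T - t) ^ p := Real.rpow_nonneg (by linarith [ht.2]) p
      rw [Real.norm_of_nonneg h2]
      rw [← mul_le_mul_iff_right₀ hC₁pos]
      calc C₁ * (T - t) ^ p ≤ f t := h1
        _ = C₁ * (C₁⁻¹ * f t) := by field_simp
    have := (integrableOn_sub_rpow_iff' hTpos).1 hint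
    linarith
  · intro hα2
    have hpgt : -1 < p := by rw [hp_def]; linarith
    have hint : IntegrableOn (fun t : ℝ => C₂ * (T - t) ^ p) (Set.Ioo (0 : ℝ) T) :=
      ((integrableOn_sub_rpow_iff' hTpos).2 hpgt).const_mul C₂
    apply Integrable.mono' hint hfmeas
    filter_upwards [ae_restrict_mem measurableSet_Ioo] with t ht
    rw [Real.norm_of_nonneg (hfnonneg t ht)]
    exact (hbounds t ht).2
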